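/- A monotone function f : [n]^k → {−1,0,1}^k × {±1} (viewed as a sign function) is safe if and only if for every slice s ∈ ([n] ∪ {*})^k there exists a unique point x ∈ L_s such that f(x)_i = 0 for all free coordinates i ∈ F(s). -/

import Mathlib

/-- Symbols of the partial-information alphabet: −1, 0, 1, ≤, ≥, ◇. -/
inductive PISym : Type where
  | neg | zero | pos | sle | sge | dia
deriving DecidableEq

/-- Points of the `k`-dimensional grid, as integer vectors. -/
abbrev Pt (k : ℕ) := Fin k → ℤ

/-- `x ∈ [n]^k`. -/
def inGrid (n k : ℕ) (x : Pt k) : Prop := ∀ i, 1 ≤ x i ∧ x i ≤ (n : ℤ)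

/-- The `i`-th standard unit vector. -/
def eVec (k : ℕ) (i : Fin k) : Pt k := fun j => if j = i then 1 else 0

/-- A slice of `[n]^k`: `none` marks a free coordinate. -/
abbrev Slice (k : ℕ) := Fin k → Option ℤ

def fullSlice (k : ℕ) : Slice k := fun _ => none

def validSlice (n : ℕ) {k : ℕ} (s : Slice k) : Prop :=
  ∀ i v, s i = some v → 1 ≤ v ∧ v ≤ (n : ℤ)

def inSlice {k : ℕ} (s : Slice k) (x : Pt k) : Prop :=
  ∀ i v, s i = some v → x i = v

/-- Monotone partial-information function (Definition 2.4). -/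
def MonoPI (n k : ℕ) (p1 : Pt k → Fin k → PISym) (p2 : Pt k → PISym) : Prop :=
  (∀ x, inGrid n k x → p2 x = PISym.pos ∨ p2 x = PISym.neg ∨ p2 x = PISym.dia) ∧
  (∀ x y, inGrid n k x → inGrid n k y → ∀ i : Fin k,
    (p1 x i = PISym.pos → x ≤ y → y i = x i →
      p1 y i = PISym.pos ∧
        (y i < (n : ℤ) → p1 (y + eVec k i) i ∈ ({PISym.pos, PISym.zero, PISym.sge} : Set PISym))) ∧
    (p1 x i = PISym.neg → y ≤ x → y i = x i →
      p1 y i = PISym.neg ∧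
        (1 < y i → p1 (y - eVec k i) i ∈ ({PISym.neg, PISym.zero, PISym.sle} : Set PISym))) ∧
    (p1 x i = PISym.zero → y ≤ x → y i = x i →
      p1 y i ∈ ({PISym.zero, PISym.neg, PISym.sle} : Set PISym)) ∧
    (p1 x i = PISym.zero → x ≤ y → y i = x i →
      p1 y i ∈ ({PISym.zero, PISym.pos, PISym.sge} : Set PISym)) ∧
    (p1 x i = PISym.sle → y ≤ x → y i = x i → p1 y i ∈ ({PISym.neg, PISym.sle} : Set PISym)) ∧
    (p1 x i = PISym.sge → x ≤ y → y i = x i → p1 y i ∈ ({PISym.pos, PISym.sge} : Set PISym))) ∧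
  (∀ x, inGrid n k x → ∀ i : Fin k,
    (x i = 1 → p1 x i ∈ ({PISym.zero, PISym.pos, PISym.sge} : Set PISym)) ∧
    (x i = (n : ℤ) → p1 x i ∈ ({PISym.zero, PISym.neg, PISym.sle} : Set PISym))) ∧
  (∀ x y, inGrid n k x → inGrid n k y → x ≤ y →
    (p2 x = PISym.pos → p2 y = PISym.pos) ∧ (p2 y = PISym.neg → p2 x = PISym.neg))

/-- Postfixed points of a PI function on a slice. -/
def Post (n k : ℕ) (p1 : Pt k → Fin k → PISym) (s : Slice k) : Set (Pt k) :=
  {x | inGrid n k x ∧ inSlice s x ∧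
       ∀ i, s i = none → p1 x i ∈ ({PISym.pos, PISym.zero, PISym.sge} : Set PISym)}

/-- Prefixed points of a PI function on a slice. -/
def Pre (n k : ℕ) (p1 : Pt k → Fin k → PISym) (s : Slice k) : Set (Pt k) :=
  {x | inGrid n k x ∧ inSlice s x ∧
       ∀ i, s i = none → p1 x i ∈ ({PISym.neg, PISym.zero, PISym.sle} : Set PISym)}

/-- Safe PI functions (Definition 2.8). -/
def SafePI (n k : ℕ) (p1 : Pt k → Fin k → PISym) (p2 : Pt k → PISym) : Prop :=
  MonoPI n k p1 p2 ∧
  ∀ s : Slice k, validSlice n s →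
    (∀ J, IsGreatest (Post n k p1 s) J →
      ∀ x, inGrid n k x → inSlice s x → x ≤ J → x ≠ J →
        (∀ i, s i = none → x i < J i →
          p1 x i ∈ ({PISym.neg, PISym.zero, PISym.pos} : Set PISym)) ∧
        (∃ i, s i = none ∧ x i < J i ∧ p1 x i = PISym.pos)) ∧
    (∀ M, IsLeast (Pre n k p1 s) M →
      ∀ x, inGrid n k x → inSlice s x → M ≤ x → x ≠ M →
        (∀ i, s i = none → M i < x i →
          p1 x i ∈ ({PISym.neg, PISym.zero, PISym.pos} : Set PISym)) ∧
        (∃ i, s i = none ∧ M i < x i ∧ p1 x i = PISym.neg))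

/-- `x^{−i}` for `i ∈ [k]`. -/
def dminus {k : ℕ} (i : Fin k) (x : Pt k) : Pt k :=
  fun j => if j ≠ i ∧ 1 < x j then x j - 1 else x j

/-- `x^{−(k+1)}`. -/
def dminusAll {k : ℕ} (x : Pt k) : Pt k :=
  fun j => if 1 < x j then x j - 1 else x j

/-- `x^{+i}` for `i ∈ [k]`. -/
def dplus (n : ℕ) {k : ℕ} (i : Fin k) (x : Pt k) : Pt k :=
  fun j => if j ≠ i ∧ x j < (n : ℤ) then x j + 1 else x j

/-- `x^{+(k+1)}`. -/
def dplusAll (n : ℕ) {k : ℕ} (x : Pt k) : Pt k :=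
  fun j => if x j < (n : ℤ) then x j + 1 else x j

def IntPlus {k : ℕ} (p1 : Pt k → Fin k → PISym) (i : Fin k) : Set (Pt k) :=
  {x | p1 (dminus i x) i = PISym.pos}

def IntPlusLast {k : ℕ} (p1 : Pt k → Fin k → PISym) (p2 : Pt k → PISym) : Set (Pt k) :=
  {x | p2 (dminusAll x) = PISym.pos ∨
    ∃ i, p1 (dminus i x) i ∈ ({PISym.pos, PISym.zero, PISym.sge} : Set PISym) ∧
         p2 (dminus i x) = PISym.pos}

def IntMinus (n : ℕ) {k : ℕ} (p1 : Pt k → Fin k → PISym) (i : Fin k) : Set (Pt k) :=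
  {x | p1 (dplus n i x) i = PISym.neg}

def IntMinusLast (n : ℕ) {k : ℕ} (p1 : Pt k → Fin k → PISym) (p2 : Pt k → PISym) : Set (Pt k) :=
  {x | p2 (dplusAll n x) = PISym.neg ∨
    ∃ i, p1 (dplus n i x) i ∈ ({PISym.neg, PISym.zero, PISym.sle} : Set PISym) ∧
         p2 (dplus n i x) = PISym.neg}

/-- `Cand⁺(p)` relative to `J = J(p)` and `M = M(p)`. -/
def CandPlus (n k : ℕ) (p1 : Pt k → Fin k → PISym) (p2 : Pt k → PISym) (J M : Pt k) :
    Set (Pt k) :=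
  {x | inGrid n k x ∧ J ≤ x ∧ x ≤ M ∧
    (∀ i, p1 x i ≠ PISym.neg ∧ x ∉ IntPlus p1 i) ∧
    p2 x ≠ PISym.neg ∧ x ∉ IntPlusLast p1 p2}

/-- `Cand⁻(p)` relative to `J = J(p)` and `M = M(p)`. -/
def CandMinus (n k : ℕ) (p1 : Pt k → Fin k → PISym) (p2 : Pt k → PISym) (J M : Pt k) :
    Set (Pt k) :=
  {x | inGrid n k x ∧ J ≤ x ∧ x ≤ M ∧
    (∀ i, p1 x i ≠ PISym.pos ∧ x ∉ IntMinus n p1 i) ∧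
    p2 x ≠ PISym.pos ∧ x ∉ IntMinusLast n p1 p2}

/-- The information partial order on symbols: `symDom a b` means `a ⇒ b`. -/
def symDom (a b : PISym) : Prop :=
  b = PISym.dia ∨ a = b ∨ (a = PISym.pos ∧ b = PISym.sge) ∨
  (a = PISym.zero ∧ (b = PISym.sge ∨ b = PISym.sle)) ∨ (a = PISym.neg ∧ b = PISym.sle)

/-- `p ⇒ p'`: `p` dominates (is more informative than) `p'`. -/
def PIdom (n k : ℕ) (p1 : Pt k → Fin k → PISym) (p2 : Pt k → PISym)
    (q1 : Pt k → Fin k → PISym) (q2 : Pt k → PISym) : Prop :=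
  ∀ x, inGrid n k x → (∀ i, symDom (p1 x i) (q1 x i)) ∧ symDom (p2 x) (q2 x)

/-- A sign value `a ∈ {−1,0,1}` is consistent with a symbol `b`. -/
def consS (a : ℤ) (b : PISym) : Prop :=
  match b with
  | PISym.dia => True
  | PISym.pos => a = 1
  | PISym.neg => a = -1
  | PISym.zero => a = 0
  | PISym.sge => a = 0 ∨ a = 1
  | PISym.sle => a = -1 ∨ a = 0

/-- A sign function `f` is consistent with the PI function `p` (i.e., `f ⇒ p`). -/
def SignCons (n k : ℕ) (f1 : Pt k → Pt k) (f2 : Pt k → ℤ)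
    (p1 : Pt k → Fin k → PISym) (p2 : Pt k → PISym) : Prop :=
  ∀ x, inGrid n k x → (∀ i, consS (f1 x i) (p1 x i)) ∧ consS (f2 x) (p2 x)

/-- Monotone sign function: `x ↦ (x + f1 x, f2 x)` is well defined and monotone. -/
def MonoSign (n k : ℕ) (f1 : Pt k → Pt k) (f2 : Pt k → ℤ) : Prop :=
  (∀ x, inGrid n k x →
    (∀ i, f1 x i = -1 ∨ f1 x i = 0 ∨ f1 x i = 1) ∧ (f2 x = 1 ∨ f2 x = -1)) ∧
  (∀ x, inGrid n k x → inGrid n k (x + f1 x)) ∧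
  (∀ a b, inGrid n k a → inGrid n k b → a ≤ b → a + f1 a ≤ b + f1 b ∧ f2 a ≤ f2 b)

def PostF (n k : ℕ) (f1 : Pt k → Pt k) (s : Slice k) : Set (Pt k) :=
  {x | inGrid n k x ∧ inSlice s x ∧ ∀ i, s i = none → 0 ≤ f1 x i}

def PreF (n k : ℕ) (f1 : Pt k → Pt k) (s : Slice k) : Set (Pt k) :=
  {x | inGrid n k x ∧ inSlice s x ∧ ∀ i, s i = none → f1 x i ≤ 0}

/-- Safe sign functions (conditions (1') and (2') of Definition 2.8). -/
def SafeSign (n k : ℕ) (f1 : Pt k → Pt k) (f2 : Pt k → ℤ) : Prop :=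
  MonoSign n k f1 f2 ∧
  ∀ s : Slice k, validSlice n s →
    (∀ J, IsGreatest (PostF n k f1 s) J →
      ∀ x, inGrid n k x → inSlice s x → x ≤ J → x ≠ J →
        ∃ i, s i = none ∧ x i < J i ∧ f1 x i = 1) ∧
    (∀ M, IsLeast (PreF n k f1 s) M →
      ∀ x, inGrid n k x → inSlice s x → M ≤ x → x ≠ M →
        ∃ i, s i = none ∧ M i < x i ∧ f1 x i = -1)

/-- The revealed solutions of a PI function. -/
def SolPI (n k : ℕ) (p1 : Pt k → Fin k → PISym) (p2 : Pt k → PISym) : Set (Pt k) :=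
  {x | inGrid n k x ∧
    (((∀ i, p1 x i ∈ ({PISym.pos, PISym.zero, PISym.sge} : Set PISym)) ∧ p2 x = PISym.pos) ∨
     ((∀ i, p1 x i ∈ ({PISym.neg, PISym.zero, PISym.sle} : Set PISym)) ∧ p2 x = PISym.neg))}

/-- `x ≪_s y` : `x ⪯ y` with strict inequality in every free coordinate of `s`. -/
def lls {k : ℕ} (s : Slice k) (x y : Pt k) : Prop :=
  x ≤ y ∧ ∀ i, s i = none → x i < y i

/-- `s` is a slice witnessing `ŝ(x,p) ≠ nil`: `x ∈ L_s` and `x ≪_s J_s(p)`. -/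
def HasSlice (n k : ℕ) (p1 : Pt k → Fin k → PISym) (x : Pt k) (s : Slice k) : Prop :=
  validSlice n s ∧ inSlice s x ∧ ∃ J, IsGreatest (Post n k p1 s) J ∧ lls s x J

/-- `s = ŝ(x,p)`: `s` is the maximal slice with `x ∈ L_s` and `x ≪_s J_s(p)`. -/
def MaxSlice (n k : ℕ) (p1 : Pt k → Fin k → PISym) (x : Pt k) (s : Slice k) : Prop :=
  HasSlice n k p1 x s ∧
  ∀ s', HasSlice n k p1 x s' → ∀ i, s' i = none → s i = none

section Aux

variable {n k : ℕ} {f1 : Pt k → Pt k} {f2 : Pt k → ℤ} {s : Slice k}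

lemma aux_grid_finite (n k : ℕ) : {x : Pt k | inGrid n k x}.Finite := by
  have hsub : {x : Pt k | inGrid n k x} ⊆ Set.pi Set.univ (fun _ : Fin k => Set.Icc (1:ℤ) n) := by
    intro x hx
    rw [Set.mem_univ_pi]
    intro i
    exact ⟨(hx i).1, (hx i).2⟩
  exact (Set.Finite.pi fun _ => Set.finite_Icc _ _).subset hsub

lemma exists_greatest_of_supClosed {S : Set (Pt k)} (hS : S ⊆ {x | inGrid n k x})
    (hne : S.Nonempty) (hsup : ∀ x ∈ S, ∀ y ∈ S, x ⊔ y ∈ S) : ∃ J, IsGreatest S J := by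
  obtain ⟨m, hm, hmax⟩ := Set.Finite.exists_maximalFor id S ((aux_grid_finite n k).subset hS) hne
  refine ⟨m, hm, fun x hx => ?_⟩
  have h := hsup m hm x hx
  have heq : m = m ⊔ x := le_antisymm le_sup_left (hmax h le_sup_left)
  rw [heq]
  exact le_sup_right

lemma exists_least_of_infClosed {S : Set (Pt k)} (hS : S ⊆ {x | inGrid n k x})
    (hne : S.Nonempty) (hinf : ∀ x ∈ S, ∀ y ∈ S, x ⊓ y ∈ S) : ∃ M, IsLeast S M := by
  obtain ⟨m, hm, hmin⟩ := Set.Finite.exists_minimalFor id S ((aux_grid_finite n k).subset hS) hne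
  refine ⟨m, hm, fun x hx => ?_⟩
  have h := hinf m hm x hx
  have heq : m = m ⊓ x := le_antisymm (hmin h inf_le_left) inf_le_left
  rw [heq]
  exact inf_le_right

lemma mono_coord (hf : MonoSign n k f1 f2) {a b : Pt k} (ha : inGrid n k a) (hb : inGrid n k b)
    (hab : a ≤ b) (i : Fin k) (h : a i = b i) : f1 a i ≤ f1 b i := by
  have h2 := (hf.2.2 a b ha hb hab).1 i
  simp only [Pi.add_apply] at h2
  omega

lemma postF_nonempty (hn : 1 ≤ n) (hf : MonoSign n k f1 f2) (hs : validSlice n s) :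
    (PostF n k f1 s).Nonempty := by
  set b : Pt k := fun i => (s i).getD 1 with hb
  have hbg : inGrid n k b := by
    intro i
    cases h : s i with
    | none =>
        have : b i = 1 := by simp [hb, h]
        rw [this]
        exact ⟨le_refl _, by exact_mod_cast hn⟩
    | some v =>
        have : b i = v := by simp [hb, h]
        rw [this]
        exact hs i v h
  refine ⟨b, hbg, ?_, ?_⟩
  · intro i v h; simp [hb, h]
  · intro i h
    have hb1 : b i = 1 := by simp [hb, h]
    have hgi := hf.2.1 b hbg i
    simp only [Pi.add_apply] at hgi
    omega

lemma preF_nonempty (hn : 1 ≤ n) (hf : MonoSign n k f1 f2) (hs : validSlice n s) :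
    (PreF n k f1 s).Nonempty := by
  set b : Pt k := fun i => (s i).getD n with hb
  have hbg : inGrid n k b := by
    intro i
    cases h : s i with
    | none =>
        have : b i = (n : ℤ) := by simp [hb, h]
        rw [this]
        exact ⟨by exact_mod_cast hn, le_refl _⟩
    | some v =>
        have : b i = v := by simp [hb, h]
        rw [this]
        exact hs i v h
  refine ⟨b, hbg, ?_, ?_⟩
  · intro i v h; simp [hb, h]
  · intro i h
    have hb1 : b i = (n : ℤ) := by simp [hb, h]
    have hgi := hf.2.1 b hbg i
    simp only [Pi.add_apply] at hgi
    omega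

lemma postF_supClosed (hf : MonoSign n k f1 f2) :
    ∀ x ∈ PostF n k f1 s, ∀ y ∈ PostF n k f1 s, x ⊔ y ∈ PostF n k f1 s := by
  intro x hx y hy
  have hg : inGrid n k (x ⊔ y) := by
    intro i
    rw [Pi.sup_apply]
    exact ⟨le_sup_of_le_left (hx.1 i).1, sup_le (hx.1 i).2 (hy.1 i).2⟩
  refine ⟨hg, ?_, ?_⟩
  · intro i v h
    rw [Pi.sup_apply, hx.2.1 i v h, hy.2.1 i v h, sup_idem]
  · intro i h
    rcases le_total (x i) (y i) with hc | hc
    · have he : y i = (x ⊔ y) i := by rw [Pi.sup_apply]; exact (sup_eq_right.mpr hc).symm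
      exact le_trans (hy.2.2 i h) (mono_coord hf hy.1 hg le_sup_right i he)
    · have he : x i = (x ⊔ y) i := by rw [Pi.sup_apply]; exact (sup_eq_left.mpr hc).symm
      exact le_trans (hx.2.2 i h) (mono_coord hf hx.1 hg le_sup_left i he)

lemma preF_infClosed (hf : MonoSign n k f1 f2) :
    ∀ x ∈ PreF n k f1 s, ∀ y ∈ PreF n k f1 s, x ⊓ y ∈ PreF n k f1 s := by
  intro x hx y hy
  have hg : inGrid n k (x ⊓ y) := by
    intro i
    rw [Pi.inf_apply]
    exact ⟨le_inf (hx.1 i).1 (hy.1 i).1, inf_le_of_left_le (hx.1 i).2⟩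
  refine ⟨hg, ?_, ?_⟩
  · intro i v h
    rw [Pi.inf_apply, hx.2.1 i v h, hy.2.1 i v h, inf_idem]
  · intro i h
    rcases le_total (x i) (y i) with hc | hc
    · have he : (x ⊓ y) i = x i := by rw [Pi.inf_apply]; exact inf_eq_left.mpr hc
      exact le_trans (mono_coord hf hg hx.1 inf_le_left i he) (hx.2.2 i h)
    · have he : (x ⊓ y) i = y i := by rw [Pi.inf_apply]; exact inf_eq_right.mpr hc
      exact le_trans (mono_coord hf hg hy.1 inf_le_right i he) (hy.2.2 i h)

lemma exists_greatest_postF (hn : 1 ≤ n) (hf : MonoSign n k f1 f2) (hs : validSlice n s) :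
    ∃ J, IsGreatest (PostF n k f1 s) J :=
  exists_greatest_of_supClosed (fun x hx => hx.1) (postF_nonempty hn hf hs) (postF_supClosed hf)

lemma exists_least_preF (hn : 1 ≤ n) (hf : MonoSign n k f1 f2) (hs : validSlice n s) :
    ∃ M, IsLeast (PreF n k f1 s) M :=
  exists_least_of_infClosed (fun x hx => hx.1) (preF_nonempty hn hf hs) (preF_infClosed hf)

lemma greatest_fixed (hf : MonoSign n k f1 f2) {J : Pt k}
    (hJ : IsGreatest (PostF n k f1 s) J) : ∀ i, s i = none → f1 J i = 0 := by
  intro i hi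
  have hJg : inGrid n k J := hJ.1.1
  have h0 : 0 ≤ f1 J i := hJ.1.2.2 i hi
  by_contra hne
  have h1 : f1 J i = 1 := by
    rcases (hf.1 J hJg).1 i with h | h | h <;> omega
  set J' : Pt k := J + eVec k i with hJ'def
  have hJ'i : J' i = J i + 1 := by simp [hJ'def, eVec, Pi.add_apply]
  have hJ'ne : ∀ j, j ≠ i → J' j = J j := by
    intro j hj; simp [hJ'def, eVec, Pi.add_apply, hj]
  have hle : J ≤ J' := by
    rw [Pi.le_def]
    intro j
    rcases eq_or_ne j i with rfl | hj
    · omega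
    · rw [hJ'ne j hj]
  have hfJi := hf.2.1 J hJg i
  simp only [Pi.add_apply] at hfJi
  have hgJ' : inGrid n k J' := by
    intro j
    rcases eq_or_ne j i with rfl | hj
    · have := (hJg j).1
      omega
    · rw [hJ'ne j hj]; exact hJg j
  have hmem : J' ∈ PostF n k f1 s := by
    refine ⟨hgJ', ?_, ?_⟩
    · intro j v h
      have hj : j ≠ i := by rintro rfl; rw [hi] at h; cases h
      rw [hJ'ne j hj]; exact hJ.1.2.1 j v h
    · intro j hjn
      rcases eq_or_ne j i with rfl | hj
      · have h2 := (hf.2.2 J J' hJg hgJ' hle).1 j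
        simp only [Pi.add_apply] at h2
        omega
      · have := mono_coord hf hJg hgJ' hle j (hJ'ne j hj).symm
        have := hJ.1.2.2 j hjn
        omega
  have hfin : J' i ≤ J i := hJ.2 hmem i
  omega

lemma least_fixed (hf : MonoSign n k f1 f2) {M : Pt k}
    (hM : IsLeast (PreF n k f1 s) M) : ∀ i, s i = none → f1 M i = 0 := by
  intro i hi
  have hMg : inGrid n k M := hM.1.1
  have h0 : f1 M i ≤ 0 := hM.1.2.2 i hi
  by_contra hne
  have h1 : f1 M i = -1 := by
    rcases (hf.1 M hMg).1 i with h | h | h <;> omega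
  set M' : Pt k := M - eVec k i with hM'def
  have hM'i : M' i = M i - 1 := by simp [hM'def, eVec, Pi.sub_apply]
  have hM'ne : ∀ j, j ≠ i → M' j = M j := by
    intro j hj; simp [hM'def, eVec, Pi.sub_apply, hj]
  have hle : M' ≤ M := by
    rw [Pi.le_def]
    intro j
    rcases eq_or_ne j i with rfl | hj
    · omega
    · rw [hM'ne j hj]
  have hfMi := hf.2.1 M hMg i
  simp only [Pi.add_apply] at hfMi
  have hgM' : inGrid n k M' := by
    intro j
    rcases eq_or_ne j i with rfl | hj
    · have := (hMg j).2
      omega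
    · rw [hM'ne j hj]; exact hMg j
  have hmem : M' ∈ PreF n k f1 s := by
    refine ⟨hgM', ?_, ?_⟩
    · intro j v h
      have hj : j ≠ i := by rintro rfl; rw [hi] at h; cases h
      rw [hM'ne j hj]; exact hM.1.2.1 j v h
    · intro j hjn
      rcases eq_or_ne j i with rfl | hj
      · have h2 := (hf.2.2 M' M hgM' hMg hle).1 j
        simp only [Pi.add_apply] at h2
        omega
      · have := mono_coord hf hgM' hMg hle j (hM'ne j hj)
        have := hM.1.2.2 j hjn
        omega
  have hfin : M i ≤ M' i := hM.2 hmem i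
  omega

end Aux

/-- Lemma 2.10: a monotone sign function is safe iff it has a unique
fixed point on every slice. -/
theorem stmt4 (n k : ℕ) (hn : 1 ≤ n) (f1 : Pt k → Pt k) (f2 : Pt k → ℤ)
    (hf : MonoSign n k f1 f2) :
    SafeSign n k f1 f2 ↔
      ∀ s : Slice k, validSlice n s →
        ∃! x : Pt k, inGrid n k x ∧ inSlice s x ∧ ∀ i, s i = none → f1 x i = 0 := by
  constructor
  · rintro ⟨hmono, hsafe⟩ s hs
    obtain ⟨J, hJ⟩ := exists_greatest_postF hn hf hs
    have hJ0 := greatest_fixed hf hJ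
    refine ⟨J, ⟨hJ.1.1, hJ.1.2.1, hJ0⟩, ?_⟩
    rintro x ⟨hxg, hxs, hx0⟩
    have hxP : x ∈ PostF n k f1 s := ⟨hxg, hxs, fun i h => le_of_eq (hx0 i h).symm⟩
    have hxJ : x ≤ J := hJ.2 hxP
    by_contra hne
    obtain ⟨i, hi, _, h1⟩ := (hsafe s hs).1 J hJ x hxg hxs hxJ hne
    have := hx0 i hi
    omega
  · intro huniq
    classical
    refine ⟨hf, fun s hs => ⟨?_, ?_⟩⟩
    · intro J hJ x hxg hxs hxJ hxne
      by_contra hcon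
      push_neg at hcon
      set s' : Slice k := fun i => if s i = none ∧ x i < J i then none else some (x i)
        with hs'def
      have hs'none : ∀ i, s' i = none ↔ (s i = none ∧ x i < J i) := by
        intro i
        by_cases h : s i = none ∧ x i < J i <;> simp [hs'def, h]
      have hs'some : ∀ i v, s' i = some v → v = x i := by
        intro i v h
        by_cases hc : s i = none ∧ x i < J i
        · simp [hs'def, hc] at h
        · simp [hs'def, hc] at h
          exact h.symm
      have hs'valid : validSlice n s' := by
        intro i v h
        rw [hs'some i v h]
        exact hxg i
      have hJ0 := greatest_fixed hf hJ
      have hxeqJ : ∀ i, ¬ (s i = none ∧ x i < J i) → J i = x i := by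
        intro i h
        cases hsi : s i with
        | none =>
            have : ¬ x i < J i := fun hlt => h ⟨hsi, hlt⟩
            have hxi : x i ≤ J i := hxJ i
            omega
        | some v => rw [hJ.1.2.1 i v hsi, hxs i v hsi]
      have hJs' : J ∈ PostF n k f1 s' := by
        refine ⟨hJ.1.1, ?_, ?_⟩
        · intro i v h
          rw [hs'some i v h]
          apply hxeqJ
          intro hc
          simp [hs'def, hc] at h
        · intro i h
          have := (hs'none i).mp h
          exact le_of_eq (hJ0 i this.1).symm
      have hxPre : x ∈ PreF n k f1 s' := by
        refine ⟨hxg, fun i v h => (hs'some i v h).symm, ?_⟩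
        · intro i h
          obtain ⟨h1, h2⟩ := (hs'none i).mp h
          have hne1 := hcon i h1 h2
          rcases (hf.1 x hxg).1 i with h | h | h <;> omega
      obtain ⟨J'', hJ''⟩ := exists_greatest_postF hn hf hs'valid
      obtain ⟨M'', hM''⟩ := exists_least_preF hn hf hs'valid
      have hPJ : inGrid n k J'' ∧ inSlice s' J'' ∧ ∀ i, s' i = none → f1 J'' i = 0 :=
        ⟨hJ''.1.1, hJ''.1.2.1, greatest_fixed hf hJ''⟩
      have hPM : inGrid n k M'' ∧ inSlice s' M'' ∧ ∀ i, s' i = none → f1 M'' i = 0 :=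
        ⟨hM''.1.1, hM''.1.2.1, least_fixed hf hM''⟩
      have heq : J'' = M'' := (huniq s' hs'valid).unique hPJ hPM
      obtain ⟨i, hilt⟩ : ∃ i, x i < J i := by
        by_contra hno
        push_neg at hno
        exact hxne (le_antisymm hxJ fun i => hno i)
      have hsi : s i = none := by
        cases hsi : s i with
        | none => rfl
        | some v =>
            have := hxs i v hsi
            have := hJ.1.2.1 i v hsi
            omega
      have hs'i : s' i = none := (hs'none i).mpr ⟨hsi, hilt⟩
      have h1 : M'' i ≤ x i := hM''.2 hxPre i
      have h2 : J i ≤ J'' i := hJ''.2 hJs' i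
      have := congrFun heq i
      omega
    · intro M hM x hxg hxs hMx hxne
      by_contra hcon
      push_neg at hcon
      set s' : Slice k := fun i => if s i = none ∧ M i < x i then none else some (x i)
        with hs'def
      have hs'none : ∀ i, s' i = none ↔ (s i = none ∧ M i < x i) := by
        intro i
        by_cases h : s i = none ∧ M i < x i <;> simp [hs'def, h]
      have hs'some : ∀ i v, s' i = some v → v = x i := by
        intro i v h
        by_cases hc : s i = none ∧ M i < x i
        · simp [hs'def, hc] at h
        · simp [hs'def, hc] at h
          exact h.symm
      have hs'valid : validSlice n s' := by
        intro i v h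
        rw [hs'some i v h]
        exact hxg i
      have hM0 := least_fixed hf hM
      have hxeqM : ∀ i, ¬ (s i = none ∧ M i < x i) → M i = x i := by
        intro i h
        cases hsi : s i with
        | none =>
            have : ¬ M i < x i := fun hlt => h ⟨hsi, hlt⟩
            have hxi : M i ≤ x i := hMx i
            omega
        | some v => rw [hM.1.2.1 i v hsi, hxs i v hsi]
      have hMs' : M ∈ PreF n k f1 s' := by
        refine ⟨hM.1.1, ?_, ?_⟩
        · intro i v h
          rw [hs'some i v h]
          apply hxeqM
          intro hc
          simp [hs'def, hc] at h
        · intro i h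
          have := (hs'none i).mp h
          exact le_of_eq (hM0 i this.1)
      have hxPost : x ∈ PostF n k f1 s' := by
        refine ⟨hxg, fun i v h => (hs'some i v h).symm, ?_⟩
        · intro i h
          obtain ⟨h1, h2⟩ := (hs'none i).mp h
          have hne1 := hcon i h1 h2
          rcases (hf.1 x hxg).1 i with h | h | h <;> omega
      obtain ⟨J'', hJ''⟩ := exists_greatest_postF hn hf hs'valid
      obtain ⟨M'', hM''⟩ := exists_least_preF hn hf hs'valid
      have hPJ : inGrid n k J'' ∧ inSlice s' J'' ∧ ∀ i, s' i = none → f1 J'' i = 0 :=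
        ⟨hJ''.1.1, hJ''.1.2.1, greatest_fixed hf hJ''⟩
      have hPM : inGrid n k M'' ∧ inSlice s' M'' ∧ ∀ i, s' i = none → f1 M'' i = 0 :=
        ⟨hM''.1.1, hM''.1.2.1, least_fixed hf hM''⟩
      have heq : J'' = M'' := (huniq s' hs'valid).unique hPJ hPM
      obtain ⟨i, hilt⟩ : ∃ i, M i < x i := by
        by_contra hno
        push_neg at hno
        exact hxne (le_antisymm (fun i => hno i) hMx)
      have hsi : s i = none := by
        cases hsi : s i with
        | none => rfl
        | some v =>
            have := hxs i v hsi
            have := hM.1.2.1 i v hsi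
            omega
      have hs'i : s' i = none := (hs'none i).mpr ⟨hsi, hilt⟩
      have h1 : x i ≤ J'' i := hJ''.2 hxPost i
      have h2 : M'' i ≤ M i := hM''.2 hMs' i
      have := congrFun heq i
      omega
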